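/- If A + A* is positive semidefinite for A ∈ ℂ^{m×m}, then SG(A) is contained in the closed right half-plane { z ∈ ℂ : Re z ≥ 0 }. -/

import Mathlib

open Matrix Complex
open scoped ComplexOrder

/-- Euclidean norm of a complex vector. -/
noncomputable def enorm' {m : ℕ} (x : Fin m → ℂ) : ℝ :=
  Real.sqrt (∑ i, Complex.normSq (x i))

/-- Real inner product Re(x* y). -/
noncomputable def rinner {m : ℕ} (x y : Fin m → ℂ) : ℝ :=
  (∑ i, (starRingEnd ℂ) (x i) * y i).re

/-- The gain γ(x, y) = ‖y‖₂ / ‖x‖₂. -/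
noncomputable def gain {m : ℕ} (x y : Fin m → ℂ) : ℝ := enorm' y / enorm' x

/-- The phase θ(x, y) = arccos(Re(x* y)/(‖x‖₂‖y‖₂)) ∈ [0, π]. -/
noncomputable def phase {m : ℕ} (x y : Fin m → ℂ) : ℝ :=
  Real.arccos (rinner x y / (enorm' x * enorm' y))

/-- The point γ(x,y)·e^{iθ(x,y)}. -/
noncomputable def sgPoint {m : ℕ} (x y : Fin m → ℂ) : ℂ :=
  (gain x y : ℂ) * Complex.exp (Complex.I * (phase x y : ℂ))

/-- The scaled graph SG(A). -/
noncomputable def SG {m : ℕ} (A : Matrix (Fin m) (Fin m) ℂ) : Set ℂ :=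
  {z | ∃ x : Fin m → ℂ, x ≠ 0 ∧ A.mulVec x ≠ 0 ∧
      (z = sgPoint x (A.mulVec x) ∨ z = (starRingEnd ℂ) (sgPoint x (A.mulVec x)))}

/-- The inverse scaled graph SG†(B). -/
noncomputable def SGdag {m : ℕ} (B : Matrix (Fin m) (Fin m) ℂ) : Set ℂ :=
  {z | ∃ x : Fin m → ℂ, x ≠ 0 ∧ B.mulVec x ≠ 0 ∧
      (z = sgPoint (B.mulVec x) x ∨ z = (starRingEnd ℂ) (sgPoint (B.mulVec x) x))}

lemma sgPoint_re {m : ℕ} (x y : Fin m → ℂ) :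
    (sgPoint x y).re = gain x y * Real.cos (phase x y) := by
  simp [sgPoint, mul_comm Complex.I, Complex.exp_mul_I, Complex.cos_ofReal_re,
    Complex.sin_ofReal_im]

theorem sg_subset_closed_rhp {m : ℕ} (A : Matrix (Fin m) (Fin m) ℂ)
    (hA : (A + Aᴴ).PosSemidef) :
    SG A ⊆ {z : ℂ | 0 ≤ z.re} := by
  intro z hz
  obtain ⟨x, hx, hAx, hcase⟩ := hz
  set y := A.mulVec x with hy
  -- rinner x y ≥ 0
  have hri : 0 ≤ rinner x y := by
    have h := (Matrix.posSemidef_iff_dotProduct_mulVec.mp hA).2 x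
    rw [Complex.le_def] at h
    have hc : star x ⬝ᵥ Aᴴ.mulVec x = star (star x ⬝ᵥ A.mulVec x) := by
      rw [Matrix.mulVec_conjTranspose, Matrix.star_dotProduct_star,
        Matrix.dotProduct_mulVec]
    have hd : star x ⬝ᵥ (A + Aᴴ).mulVec x
        = star x ⬝ᵥ A.mulVec x + star (star x ⬝ᵥ A.mulVec x) := by
      rw [Matrix.add_mulVec, dotProduct_add, hc]
    rw [hd] at h
    have hre : (star x ⬝ᵥ A.mulVec x
        + star (star x ⬝ᵥ A.mulVec x)).re = 2 * (star x ⬝ᵥ A.mulVec x).re := by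
      simp [Complex.add_re]; ring
    have h0 : 0 ≤ (star x ⬝ᵥ A.mulVec x).re := by
      have := h.1
      simp only [Complex.zero_re] at this
      rw [hre] at this
      linarith
    have : rinner x y = (star x ⬝ᵥ A.mulVec x).re := by
      simp [rinner, dotProduct, hy]
    rw [this]; exact h0
  have hg : 0 ≤ gain x y :=
    div_nonneg (Real.sqrt_nonneg _) (Real.sqrt_nonneg _)
  have ht : 0 ≤ rinner x y / (enorm' x * enorm' y) :=
    div_nonneg hri (mul_nonneg (Real.sqrt_nonneg _) (Real.sqrt_nonneg _))
  have hcos : 0 ≤ Real.cos (phase x y) := by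
    apply Real.cos_nonneg_of_mem_Icc
    have h0 : 0 ≤ phase x y := Real.arccos_nonneg _
    constructor
    · linarith [Real.pi_div_two_pos]
    · exact Real.arccos_le_pi_div_two.2 ht
  have hre0 : 0 ≤ (sgPoint x y).re := by
    rw [sgPoint_re]; exact mul_nonneg hg hcos
  rcases hcase with h | h <;> rw [Set.mem_setOf_eq, h]
  · exact hre0
  · simpa using hre0
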